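/- There exists a weak fan functional: a map Λ assigning to each g : 2^ℕ → ℕ and k ∈ ℕ a finite list of binary sequences α₀,…,αₘ and a bound N, such that for every binary tree T ⊆ 2^{<ℕ}, if ᾱᵢ(g(αᵢ)) ∉ T for all i, then there exists n ≤ N with |{σ ∈ T : |σ| = n}| / 2^n ≤ 1/k. -/

import Mathlib

/-- The initial segment `⟨f 0, …, f (n-1)⟩` of `f` of length `n`. -/
def seg (f : ℕ → ℕ) (n : ℕ) : List ℕ := (List.range n).map f

/-- `T` is a binary tree: all entries are bits and `T` is closed under initial segments. -/
def IsBinaryTree (T : Set (List ℕ)) : Prop :=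
  (∀ σ ∈ T, ∀ m ∈ σ, m ≤ 1) ∧ ∀ σ ∈ T, ∀ n, σ.take n ∈ T

/-- Embed a boolean sequence as a 0/1 natural sequence. -/
def embB (β : ℕ → Bool) : ℕ → ℕ := fun n => if β n then 1 else 0

lemma embB_le_one (β : ℕ → Bool) (n : ℕ) : embB β n ≤ 1 := by
  unfold embB; split <;> omega

/-- Compactness: finitely many cylinders `[β̄ (g (embB β))]` cover Cantor space. -/
lemma finite_cover (g : (ℕ → ℕ) → ℕ) :
    ∃ s : Finset (ℕ → Bool), ∀ γ : ℕ → Bool, ∃ β ∈ s, ∀ i < g (embB β), γ i = β i := by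
  have hcov : Set.univ ⊆ ⋃ β : ℕ → Bool, {γ : ℕ → Bool | ∀ i < g (embB β), γ i = β i} := by
    intro γ _
    exact Set.mem_iUnion.2 ⟨γ, fun i _ => rfl⟩
  have hopen : ∀ β : ℕ → Bool, IsOpen {γ : ℕ → Bool | ∀ i < g (embB β), γ i = β i} := by
    intro β
    have : {γ : ℕ → Bool | ∀ i < g (embB β), γ i = β i}
        = ⋂ i ∈ Finset.range (g (embB β)), (fun γ : ℕ → Bool => γ i) ⁻¹' {β i} := by
      ext γ; simp
    rw [this]
    exact isOpen_biInter_finset fun i _ =>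
      (continuous_apply i).isOpen_preimage _ (isOpen_discrete _)
  obtain ⟨s, hs⟩ := isCompact_univ.elim_finite_subcover _ hopen hcov
  refine ⟨s, fun γ => ?_⟩
  have := hs (Set.mem_univ γ)
  simpa using this

theorem weak_fan_functional_exists :
    ∃ Λ : ((ℕ → ℕ) → ℕ) → ℕ → List (ℕ → ℕ) × ℕ,
      ∀ (g : (ℕ → ℕ) → ℕ) (k : ℕ),
        (∀ α ∈ (Λ g k).1, ∀ n, α n ≤ 1) ∧
        ∀ T : Set (List ℕ), IsBinaryTree T →
          (∀ α ∈ (Λ g k).1, seg α (g α) ∉ T) →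
          ∃ n ≤ (Λ g k).2, k * {σ | σ ∈ T ∧ σ.length = n}.ncard ≤ 2 ^ n := by
  choose s hs using finite_cover
  refine ⟨fun g _ => ((s g).toList.map embB, (s g).sup (fun β => g (embB β))), fun g k => ?_⟩
  constructor
  · intro α hα n
    obtain ⟨β, _, rfl⟩ := List.mem_map.1 hα
    exact embB_le_one β n
  intro T hT havoid
  set N := (s g).sup (fun β => g (embB β)) with hN
  refine ⟨N, le_refl _, ?_⟩
  have hempty : {σ | σ ∈ T ∧ σ.length = N} = ∅ := by
    ext σ
    simp only [Set.mem_setOf_eq, Set.mem_empty_iff_false, iff_false]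
    rintro ⟨hσT, hlen⟩
    -- extend σ to a boolean sequence
    set γ : ℕ → Bool := fun i => decide (σ.getD i 0 = 1) with hγ
    obtain ⟨β, hβs, hagree⟩ := hs g γ
    set m := g (embB β) with hm
    have hmN : m ≤ N := Finset.le_sup (f := fun β => g (embB β)) hβs
    have hkey : seg (embB β) m = σ.take m := by
      apply List.ext_getElem
      · simp [seg, hlen, hmN]
      · intro i h1 h2
        have hi : i < m := by simpa [seg] using h1
        have hiσ : i < σ.length := by omega
        simp only [seg, List.getElem_map, List.getElem_range, List.getElem_take]
        have hb : σ[i] ≤ 1 := hT.1 σ hσT _ (List.getElem_mem hiσ)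
        have hgd : σ.getD i 0 = σ[i] := List.getD_eq_getElem σ 0 hiσ
        have := hagree i hi
        rw [hγ] at this
        simp only [hgd] at this
        unfold embB
        rw [← this]
        rcases Nat.le_one_iff_eq_zero_or_eq_one.1 hb with h | h <;> simp [h]
    have : seg (embB β) m ∈ T := hkey ▸ hT.2 σ hσT m
    exact havoid (embB β) (List.mem_map.2 ⟨β, Finset.mem_toList.2 hβs, rfl⟩) this
  rw [hempty]
  simp
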